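/- Let ω ∈ ℂ with Im ω > 0 and λ ∈ ℂ with exp(-Im ω) < |λ| ≤ 1 and λ ≠ 1. If f : ℂ → ℂ is holomorphic on all of ℂ and satisfies f(z + 2π) = f(z) and f(z + ω) = λ·f(z) for all z ∈ ℂ, then f is identically zero. -/

import Mathlib

open Complex

/-- An entire function that is doubly periodic (with periods `2π` and `ω`, `Im ω > 0`)
is constant. -/
lemma const_of_doubly_periodic (ω : ℂ) (hω : 0 < ω.im) (g : ℂ → ℂ)
    (hg : Differentiable ℂ g)
    (hp1 : Function.Periodic g (2 * Real.pi)) (hp2 : Function.Periodic g ω) (z : ℂ) :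
    g z = g 0 := by
  set F : ℝ × ℝ → ℂ := fun p => g ((p.1 : ℂ) * (2 * Real.pi) + (p.2 : ℂ) * ω) with hF
  have hKc : IsCompact (F '' (Set.Icc (0:ℝ) 1 ×ˢ Set.Icc (0:ℝ) 1)) := by
    apply (isCompact_Icc.prod isCompact_Icc).image
    apply hg.continuous.comp
    fun_prop
  have hrange : Set.range g ⊆ F '' (Set.Icc (0:ℝ) 1 ×ˢ Set.Icc (0:ℝ) 1) := by
    rintro _ ⟨w, rfl⟩
    set t : ℝ := w.im / ω.im with ht
    set s : ℝ := (w.re - t * ω.re) / (2 * Real.pi) with hs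
    have hπ : (2 * Real.pi : ℝ) ≠ 0 := by positivity
    have hw : w = (s : ℂ) * (2 * Real.pi) + (t : ℂ) * ω := by
      apply Complex.ext <;>
        simp only [Complex.add_re, Complex.add_im, Complex.mul_re, Complex.mul_im,
          Complex.ofReal_re, Complex.ofReal_im, Complex.mul_re, Complex.ofReal_mul,
          Complex.ofReal_ofNat, Complex.mul_im]
      · have : s * (2 * Real.pi) = w.re - t * ω.re := div_mul_cancel₀ _ hπ
        simp [Complex.ofReal_re, Complex.ofReal_im]
        nlinarith [this]
      · have : t * ω.im = w.im := div_mul_cancel₀ _ hω.ne'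
        simp [Complex.ofReal_re, Complex.ofReal_im]
        nlinarith [this]
    refine ⟨(Int.fract s, Int.fract t), ⟨⟨Int.fract_nonneg s, (Int.fract_lt_one s).le⟩,
      ⟨Int.fract_nonneg t, (Int.fract_lt_one t).le⟩⟩, ?_⟩
    have e1 : ((Int.fract s : ℝ) : ℂ) * (2 * Real.pi) + ((Int.fract t : ℝ) : ℂ) * ω
        = (w - (⌊t⌋ : ℂ) * ω) - (⌊s⌋ : ℂ) * (2 * Real.pi) := by
      rw [hw]; unfold Int.fract; push_cast; ring
    have e2 : g ((w - (⌊t⌋ : ℂ) * ω) - (⌊s⌋ : ℂ) * (2 * Real.pi)) = g w := by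
      rw [hp1.sub_int_mul_eq, hp2.sub_int_mul_eq]
    simp only [hF, e1, e2]
  have hb : Bornology.IsBounded (Set.range g) := hKc.isBounded.subset hrange
  exact hg.apply_eq_apply_of_bounded hb z 0

theorem holomorphic_section_vanishes
    (ω lam : ℂ) (hω : 0 < ω.im)
    (hlam1 : Real.exp (-ω.im) < ‖lam‖) (hlam2 : ‖lam‖ ≤ 1)
    (hlam3 : lam ≠ 1)
    (f : ℂ → ℂ) (hf : Differentiable ℂ f)
    (h1 : ∀ z, f (z + 2 * Real.pi) = f z)
    (h2 : ∀ z, f (z + ω) = lam * f z) :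
    ∀ z, f z = 0 := by
  have hlam0 : lam ≠ 0 := by
    intro h
    rw [h] at hlam1
    simp only [norm_zero] at hlam1
    exact absurd hlam1 (not_lt.2 (Real.exp_pos _).le)
  -- the key identity: f z * f (w - z) = f 0 * f w
  have key : ∀ w z, f z * f (w - z) = f 0 * f w := by
    intro w z
    have hg : Differentiable ℂ (fun z => f z * f (w - z)) :=
      hf.mul (hf.comp ((differentiable_const w).sub differentiable_id))
    have hp1 : Function.Periodic (fun z => f z * f (w - z)) (2 * Real.pi) := by
      intro z
      have e : f (w - (z + 2 * Real.pi)) = f (w - z) := by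
        have := h1 (w - z - 2 * Real.pi)
        rw [sub_add_cancel] at this
        rw [show w - (z + 2 * (Real.pi:ℂ)) = w - z - 2 * Real.pi by ring, this]
      simp only [e, h1 z]
    have hp2 : Function.Periodic (fun z => f z * f (w - z)) ω := by
      intro z
      have e : f (w - (z + ω)) = lam⁻¹ * f (w - z) := by
        have := h2 (w - z - ω)
        rw [sub_add_cancel] at this
        rw [show w - (z + ω) = w - z - ω by ring]
        field_simp [this]
        rw [this]; ring
      simp only [e, h2 z]
      field_simp
    have := const_of_doubly_periodic ω hω _ hg hp1 hp2 z
    simpa using this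
  by_cases h0 : f 0 = 0
  · intro z
    have := key (2 * z) z
    rw [show (2:ℂ) * z - z = z by ring, h0, zero_mul, mul_self_eq_zero] at this
    exact this
  · exfalso
    -- f' w * f 0 = f' 0 * f w
    have hderiv : ∀ w, f 0 * deriv f w = deriv f 0 * f w := by
      intro w
      have hd : HasDerivAt (fun z => f z * f (w - z))
          (deriv f 0 * f (w - 0) + f 0 * (deriv f (w - 0) * (-1))) 0 := by
        have hdf : HasDerivAt f (deriv f 0) 0 := (hf 0).hasDerivAt
        have hsub : HasDerivAt (fun z : ℂ => w - z) (-1) 0 := (hasDerivAt_id 0).const_sub w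
        have hcomp : HasDerivAt (fun z : ℂ => f (w - z)) (deriv f (w - 0) * (-1)) 0 :=
          ((hf (w - 0)).hasDerivAt).comp 0 hsub
        exact hdf.mul hcomp
      have heq : (fun z => f z * f (w - z)) = fun _ => f 0 * f w := funext (key w)
      rw [heq] at hd
      have := hd.unique (hasDerivAt_const _ _)
      rw [sub_zero] at this
      linear_combination -this
    -- so deriv f = c • f with c = deriv f 0 / f 0 ; hence f z = f 0 * exp (c z)
    set c : ℂ := deriv f 0 / f 0 with hc
    have hderiv' : ∀ w, deriv f w = c * f w := by
      intro w
      have := hderiv w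
      rw [hc, div_mul_eq_mul_div, eq_div_iff h0]
      linear_combination this
    have hexp : ∀ z, f z = f 0 * Complex.exp (c * z) := by
      have hconst : ∀ z, f z * Complex.exp (-(c * z)) = f 0 := by
        intro z
        have hdiff : Differentiable ℂ (fun z => f z * Complex.exp (-(c * z))) := by
          exact hf.mul (by fun_prop)
        have hd0 : ∀ x, deriv (fun z => f z * Complex.exp (-(c * z))) x = 0 := by
          intro x
          have hdf : HasDerivAt f (c * f x) x := by
            have := (hf x).hasDerivAt; rwa [hderiv' x] at this
          have he : HasDerivAt (fun z : ℂ => Complex.exp (-(c * z)))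
              (Complex.exp (-(c * x)) * (-c)) x := by
            have h1' : HasDerivAt (fun z : ℂ => -(c * z)) (-c) x := by
              have h := ((hasDerivAt_id x).const_mul c).neg; rw [mul_one] at h; exact h
            exact (Complex.hasDerivAt_exp (-(c * x))).comp x h1'
          have := hdf.mul he
          have h0' : c * f x * Complex.exp (-(c * x)) + f x * (Complex.exp (-(c * x)) * (-c)) = 0 := by
            ring
          rw [h0'] at this
          exact this.deriv
        have := is_const_of_deriv_eq_zero hdiff hd0 z 0
        simpa using this
      intro z
      calc f z = f z * (Complex.exp (-(c * z)) * Complex.exp (c * z)) := by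
            rw [← Complex.exp_add]; simp
        _ = (f z * Complex.exp (-(c * z))) * Complex.exp (c * z) := by ring
        _ = f 0 * Complex.exp (c * z) := by rw [hconst z]
    -- periodicity forces c = n * I
    have hc1 : Complex.exp (c * (2 * Real.pi)) = 1 := by
      have := h1 0
      rw [hexp (0 + 2 * Real.pi), hexp 0] at this
      rw [zero_add] at this
      simp only [mul_zero, Complex.exp_zero, mul_one] at this
      exact mul_left_cancel₀ h0 (this.trans (mul_one _).symm)
    obtain ⟨n, hn⟩ := Complex.exp_eq_one_iff.mp hc1
    have hcn : c = n * I := by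
      have hπ : (2 * (Real.pi:ℂ)) ≠ 0 := by
        simp [Real.pi_ne_zero, Complex.ofReal_ne_zero]
      have hn' : c * (2 * (Real.pi:ℂ)) = (↑n * I) * (2 * (Real.pi:ℂ)) := by rw [hn]; ring
      exact mul_right_cancel₀ hπ hn'
    -- and lam = exp (n * I * ω)
    have hlam : lam = Complex.exp ((n : ℂ) * I * ω) := by
      have := h2 0
      rw [hexp (0 + ω), hexp 0] at this
      rw [zero_add] at this
      simp only [mul_zero, Complex.exp_zero, mul_one] at this
      have h' : Complex.exp (c * ω) = lam :=
        mul_left_cancel₀ h0 (this.trans (mul_comm lam (f 0)))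
      rw [← h', hcn]
    have habs : ‖lam‖ = Real.exp (-(n : ℝ) * ω.im) := by
      rw [hlam, Complex.norm_exp]
      congr 1
      simp [Complex.mul_re, Complex.I_re, Complex.I_im]
    rcases lt_trichotomy n 0 with hn0 | hn0 | hn0
    · -- n ≤ -1 : |lam| = exp(-n ω.im) ≥ exp(ω.im) > 1
      have h1n : (1:ℝ) ≤ -(n:ℝ) := by exact_mod_cast Int.le_neg_of_le_neg (by omega)
      have : (1:ℝ) < Real.exp (-(n:ℝ) * ω.im) := by
        rw [← Real.exp_zero]
        apply Real.exp_lt_exp.mpr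
        nlinarith
      rw [← habs] at this
      linarith
    · rw [hn0] at hlam
      simp at hlam
      exact hlam3 hlam
    · -- n ≥ 1 : |lam| = exp(-n ω.im) ≤ exp(-ω.im) < |lam|
      have h1n : (1:ℝ) ≤ (n:ℝ) := by exact_mod_cast hn0
      have : Real.exp (-(n:ℝ) * ω.im) ≤ Real.exp (-ω.im) := by
        apply Real.exp_le_exp.mpr
        nlinarith
      rw [← habs] at this
      linarith
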